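/- Let k ≤ 0 and let f : [0, ∞) → ℝ be twice differentiable with f'' ≤ -k·f, f(0) = 1, and f(t) > 0 for all t ≥ 0. Then f(t) ≥ exp(-√(-k)·t) for all t ≥ 0. In particular, if k = 0 then f(t) ≥ 1 for all t ≥ 0. -/

import Mathlib

/-- If `k ≤ 0` and `f : [0,∞) → ℝ` is twice differentiable with `f'' ≤ -k f`,
`f 0 = 1` and `f > 0`, then `f t ≥ exp(-√(-k) t)` for all `t ≥ 0`
(for `k = 0` this says `f t ≥ 1`). -/
theorem stmt_0 (k : ℝ) (hk : k ≤ 0) (f f' f'' : ℝ → ℝ)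
    (hd1 : ∀ t, 0 ≤ t → HasDerivAt f (f' t) t)
    (hd2 : ∀ t, 0 ≤ t → HasDerivAt f' (f'' t) t)
    (hineq : ∀ t, 0 ≤ t → f'' t ≤ -k * f t)
    (hf0 : f 0 = 1)
    (hpos : ∀ t, 0 ≤ t → 0 < f t) :
    ∀ t, 0 ≤ t → Real.exp (-Real.sqrt (-k) * t) ≤ f t := by
  set c : ℝ := Real.sqrt (-k) with hc
  have hc0 : 0 ≤ c := Real.sqrt_nonneg _
  have hc2 : c * c = -k := Real.mul_self_sqrt (by linarith)
  set w : ℝ → ℝ := fun t => f' t + c * f t with hwdef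
  have hw : ∀ t, 0 ≤ t → HasDerivAt w (f'' t + c * f' t) t := fun t ht =>
    (hd2 t ht).add ((hd1 t ht).const_mul c)
  set h : ℝ → ℝ := fun t => f t * Real.exp (c * t) with hhdef
  have hexp : ∀ t : ℝ, HasDerivAt (fun s => Real.exp (c * s)) (Real.exp (c * t) * (c * 1)) t :=
    fun t => ((hasDerivAt_id t).const_mul c).exp
  have hh : ∀ t, 0 ≤ t → HasDerivAt h (w t * Real.exp (c * t)) t := by
    intro t ht
    have := (hd1 t ht).mul (hexp t)
    refine this.congr_deriv ?_
    simp only [hwdef]; ring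
  have hhpos : ∀ t, 0 ≤ t → 0 < h t := fun t ht =>
    mul_pos (hpos t ht) (Real.exp_pos _)
  -- Key: w is nonnegative on [0, ∞)
  have hwnn : ∀ t, 0 ≤ t → 0 ≤ w t := by
    by_contra hcon
    push_neg at hcon
    obtain ⟨t₀, ht₀, hwt₀⟩ := hcon
    set g : ℝ → ℝ := fun t => w t * Real.exp (-c * t) with hgdef
    have hg : ∀ t, 0 ≤ t → HasDerivAt g
        ((f'' t + c * f' t) * Real.exp (-c * t) + w t * (Real.exp (-c * t) * (-c * 1))) t := by
      intro t ht
      exact (hw t ht).mul ((hasDerivAt_id t).const_mul (-c)).exp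
    have hganti : AntitoneOn g (Set.Ici t₀) := by
      apply antitoneOn_of_hasDerivWithinAt_nonpos (convex_Ici t₀)
      · intro x hx
        have hx0 : 0 ≤ x := le_trans ht₀ hx
        exact (hg x hx0).continuousAt.continuousWithinAt
      · intro x hx
        rw [interior_Ici] at hx
        have hx0 : 0 ≤ x := le_of_lt (lt_of_le_of_lt ht₀ hx)
        exact ((hg x hx0).hasDerivWithinAt)
      · intro x hx
        rw [interior_Ici] at hx
        have hx0 : 0 ≤ x := le_of_lt (lt_of_le_of_lt ht₀ hx)
        have key : f'' x + c * f' x + w x * (-c) = f'' x - c * c * f x := by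
          simp [hwdef]; ring
        have h1 : f'' x - c * c * f x ≤ 0 := by
          have := hineq x hx0
          rw [hc2]; linarith
        have hep : 0 < Real.exp (-c * x) := Real.exp_pos _
        have : (f'' x + c * f' x) * Real.exp (-c * x) + w x * (Real.exp (-c * x) * (-c * 1))
            = (f'' x - c * c * f x) * Real.exp (-c * x) := by simp only [hwdef]; ring
        rw [this]
        exact mul_nonpos_of_nonpos_of_nonneg h1 hep.le
    have hgt₀ : g t₀ < 0 := mul_neg_of_neg_of_pos hwt₀ (Real.exp_pos _)
    set A : ℝ := -(g t₀) * Real.exp (2 * c * t₀) with hAdef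
    have hApos : 0 < A := mul_pos (by linarith) (Real.exp_pos _)
    -- h' ≤ -A on [t₀, ∞)
    have hkey : ∀ x, t₀ < x → w x * Real.exp (c * x) + A ≤ 0 := by
      intro x hx
      have hx0 : 0 ≤ x := le_of_lt (lt_of_le_of_lt ht₀ hx)
      have hgle : g x ≤ g t₀ := hganti (Set.self_mem_Ici) (le_of_lt hx) (le_of_lt hx)
      have hep : 0 < Real.exp (c * x) := Real.exp_pos _
      have hwx : w x ≤ g t₀ * Real.exp (c * x) := by
        have : w x * Real.exp (-c * x) * Real.exp (c * x) ≤ g t₀ * Real.exp (c * x) :=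
          mul_le_mul_of_nonneg_right hgle hep.le
        rwa [mul_assoc, ← Real.exp_add, neg_mul, neg_add_cancel, Real.exp_zero, mul_one] at this
      have h2 : w x * Real.exp (c * x) ≤ g t₀ * (Real.exp (c * x) * Real.exp (c * x)) := by
        nlinarith
      have h3 : Real.exp (c * x) * Real.exp (c * x) = Real.exp (2 * c * x) := by
        rw [← Real.exp_add]; ring_nf
      have h4 : Real.exp (2 * c * t₀) ≤ Real.exp (2 * c * x) := by
        apply Real.exp_le_exp.mpr
        nlinarith
      have h5 : g t₀ * Real.exp (2 * c * x) ≤ g t₀ * Real.exp (2 * c * t₀) := by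
        nlinarith
      rw [h3] at h2
      have : g t₀ * Real.exp (2 * c * t₀) + A = 0 := by rw [hAdef]; ring
      linarith
    -- φ = h + A t is antitone on [t₀, ∞)
    set φ : ℝ → ℝ := fun t => h t + A * t with hφdef
    have hφanti : AntitoneOn φ (Set.Ici t₀) := by
      apply antitoneOn_of_hasDerivWithinAt_nonpos (convex_Ici t₀)
        (f' := fun t => w t * Real.exp (c * t) + A)
      · intro x hx
        have hx0 : 0 ≤ x := le_trans ht₀ hx
        exact ((hh x hx0).add ((hasDerivAt_id x).const_mul A)).continuousAt.continuousWithinAt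
      · intro x hx
        rw [interior_Ici] at hx
        have hx0 : 0 ≤ x := le_of_lt (lt_of_le_of_lt ht₀ hx)
        have := (hh x hx0).add ((hasDerivAt_id x).const_mul A)
        exact this.hasDerivWithinAt.congr_deriv (by ring)
      · intro x hx
        rw [interior_Ici] at hx
        exact hkey x hx
    have hT : t₀ ≤ t₀ + h t₀ / A + 1 := by
      have : 0 < h t₀ / A := div_pos (hhpos t₀ ht₀) hApos
      linarith
    have := hφanti Set.self_mem_Ici hT hT
    have hhT : 0 < h (t₀ + h t₀ / A + 1) := hhpos _ (le_trans ht₀ hT)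
    have hdiv : A * (h t₀ / A) = h t₀ := by field_simp
    simp only [hφdef] at this
    nlinarith
  -- h is monotone on [0, ∞), hence h t ≥ h 0 = 1
  have hmono : MonotoneOn h (Set.Ici (0 : ℝ)) := by
    apply monotoneOn_of_hasDerivWithinAt_nonneg (convex_Ici 0)
      (f' := fun t => w t * Real.exp (c * t))
    · intro x hx
      exact (hh x hx).continuousAt.continuousWithinAt
    · intro x hx
      rw [interior_Ici] at hx
      exact (hh x hx.le).hasDerivWithinAt
    · intro x hx
      rw [interior_Ici] at hx
      exact mul_nonneg (hwnn x hx.le) (Real.exp_pos _).le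
  intro t ht
  have h1 : (1 : ℝ) ≤ h t := by
    have := hmono Set.self_mem_Ici ht ht
    simpa [hhdef, hf0] using this
  have hep : 0 < Real.exp (c * t) := Real.exp_pos _
  have hinv : Real.exp (-c * t) * Real.exp (c * t) = 1 := by
    rw [← Real.exp_add]; ring_nf; exact Real.exp_zero
  simp only [hhdef] at h1
  nlinarith
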